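/- Let V : M → (−∞,+∞] be proper convex and define R(X) = inf_{t ∈ ℝ} (t + V(X − t)), attained at t̄. Then for any X, the subdifferential satisfies ∂R(X) = ∂V(X − t̄) ∩ {p : E[p] = 1}, given that R satisfies translation equivariance R(X + c) = R(X) + c. -/

import Mathlib

open MeasureTheory

/-- The constant function `1` as an element of `L²(μ)`. -/
noncomputable def oneLp {Θ : Type*} [MeasurableSpace Θ] (μ : Measure Θ)
    [IsFiniteMeasure μ] : Lp ℝ 2 μ :=
  MemLp.toLp (fun _ => (1 : ℝ)) (memLp_const 1)

/-- The optimized certainty equivalent `R(X) = inf_t (t + V(X − t))`. -/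
noncomputable def OCE {Θ : Type*} [MeasurableSpace Θ] (μ : Measure Θ)
    [IsFiniteMeasure μ] (V : Lp ℝ 2 μ → EReal) (X : Lp ℝ 2 μ) : EReal :=
  ⨅ t : ℝ, ((t : EReal) + V (X - t • oneLp μ))

/-- `p` is a subgradient of `f` at `Y` (with pairing `⟨p,W⟩ = E[pW]`). -/
def IsSubgradientAt {Θ : Type*} [MeasurableSpace Θ] (μ : Measure Θ)
    (f : Lp ℝ 2 μ → EReal) (Y p : Lp ℝ 2 μ) : Prop :=
  ∀ Z : Lp ℝ 2 μ, ((∫ θ, p θ * (Z θ - Y θ) ∂μ : ℝ) : EReal) + f Y ≤ f Z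

section Aux

variable {Θ : Type*} [MeasurableSpace Θ] {μ : Measure Θ} [IsProbabilityMeasure μ]

lemma integ_mul (p f : Lp ℝ 2 μ) : Integrable (fun θ => p θ * f θ) μ := by
  have := MeasureTheory.L2.integrable_inner (𝕜 := ℝ) f p
  simpa [RCLike.inner_apply] using this

lemma integ_pair (p Z Y : Lp ℝ 2 μ) :
    Integrable (fun θ => p θ * (Z θ - Y θ)) μ := by
  refine (integ_mul p (Z - Y)).congr ?_
  filter_upwards [Lp.coeFn_sub Z Y] with θ h1
  rw [h1, Pi.sub_apply]

lemma oneLp_ae : (↑(oneLp μ) : Θ → ℝ) =ᵐ[μ] fun _ => 1 :=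
  MemLp.coeFn_toLp _

lemma coe_sub_smul_one (a : Lp ℝ 2 μ) (c : ℝ) :
    (↑(a - c • oneLp μ) : Θ → ℝ) =ᵐ[μ] fun θ => a θ - c := by
  filter_upwards [Lp.coeFn_sub a (c • oneLp μ), Lp.coeFn_smul c (oneLp μ),
    oneLp_ae (μ := μ)] with θ h1 h2 h3
  rw [h1, Pi.sub_apply, h2, Pi.smul_apply, h3, smul_eq_mul, mul_one]

lemma coe_add_smul_one (a : Lp ℝ 2 μ) (c : ℝ) :
    (↑(a + c • oneLp μ) : Θ → ℝ) =ᵐ[μ] fun θ => a θ + c := by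
  filter_upwards [Lp.coeFn_add a (c • oneLp μ), Lp.coeFn_smul c (oneLp μ),
    oneLp_ae (μ := μ)] with θ h1 h2 h3
  rw [h1, Pi.add_apply, h2, Pi.smul_apply, h3, smul_eq_mul, mul_one]

end Aux

/-- for the OCE `R(X) = inf_t (t + V(X−t))`, attained at `t̄`
(with finite value) and translation equivariant, one has
`∂R(X) = ∂V(X − t̄) ∩ {p : E[p] = 1}`. -/
theorem OCE_subdifferential {Θ : Type*} [MeasurableSpace Θ]
    (μ : Measure Θ) [IsProbabilityMeasure μ]
    (V : Lp ℝ 2 μ → EReal)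
    (hproper : ∃ X, V X ≠ ⊤) (hnobot : ∀ X, V X ≠ ⊥)
    (hconv : ∀ X Y : Lp ℝ 2 μ, ∀ a b : ℝ, 0 ≤ a → 0 ≤ b → a + b = 1 →
      V (a • X + b • Y) ≤ (a : EReal) * V X + (b : EReal) * V Y)
    (htrans : ∀ (X : Lp ℝ 2 μ) (c : ℝ),
      OCE μ V (X + c • oneLp μ) = OCE μ V X + (c : EReal))
    (X : Lp ℝ 2 μ) (tbar : ℝ)
    (hattain : OCE μ V X = (tbar : EReal) + V (X - tbar • oneLp μ))
    (hfin : V (X - tbar • oneLp μ) ≠ ⊤) :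
    ∀ p : Lp ℝ 2 μ,
      IsSubgradientAt μ (OCE μ V) X p ↔
        (IsSubgradientAt μ V (X - tbar • oneLp μ) p ∧ ∫ θ, p θ ∂μ = 1) := by
  intro p
  set Y := X - tbar • oneLp μ with hY
  obtain ⟨v, hv⟩ : ∃ v : ℝ, V Y = (v : EReal) :=
    ⟨(V Y).toReal, (EReal.coe_toReal hfin (hnobot Y)).symm⟩
  have hR : OCE μ V X = ((tbar + v : ℝ) : EReal) := by
    rw [hattain, hv, EReal.coe_add]
  constructor
  · intro hsub
    have hEp : ∫ θ, p θ ∂μ = 1 := by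
      have key : ∀ c : ℝ, c * ∫ θ, p θ ∂μ ≤ c := by
        intro c
        have h := hsub (X + c • oneLp μ)
        rw [htrans X c, hR] at h
        have hint : ∫ θ, p θ * ((X + c • oneLp μ) θ - X θ) ∂μ = c * ∫ θ, p θ ∂μ := by
          rw [← integral_const_mul _ _]
          refine integral_congr_ae ?_
          filter_upwards [coe_add_smul_one X c] with θ h1
          rw [h1]; ring
        rw [hint] at h
        have h' : ((c * ∫ θ, p θ ∂μ + (tbar + v) : ℝ) : EReal)
            ≤ (((tbar + v) + c : ℝ) : EReal) := by
          push_cast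
          exact h
        rw [EReal.coe_le_coe_iff] at h'
        linarith
      have h1 := key 1
      have h2 := key (-1)
      linarith
    refine ⟨?_, hEp⟩
    intro W
    have h := hsub (W + tbar • oneLp μ)
    rw [htrans W tbar, hR] at h
    have hOW : OCE μ V W ≤ V W := by
      have := iInf_le (fun t : ℝ => ((t : EReal) + V (W - t • oneLp μ))) 0
      simpa [OCE] using this
    have hint : ∫ θ, p θ * ((W + tbar • oneLp μ) θ - X θ) ∂μ
        = ∫ θ, p θ * (W θ - Y θ) ∂μ := by
      refine integral_congr_ae ?_
      filter_upwards [coe_add_smul_one W tbar, coe_sub_smul_one X tbar] with θ h1 h2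
      rw [h1, hY, h2]; ring
    rw [hint] at h
    set I : ℝ := ∫ θ, p θ * (W θ - Y θ) ∂μ
    have h2 : ((I + v : ℝ) : EReal) + (tbar : EReal) ≤ V W + (tbar : EReal) := by
      calc ((I + v : ℝ) : EReal) + (tbar : EReal)
          = (I : EReal) + ((tbar + v : ℝ) : EReal) := by push_cast; rw [add_assoc, add_comm (v : EReal)]
        _ ≤ OCE μ V W + (tbar : EReal) := h
        _ ≤ V W + (tbar : EReal) := add_le_add_left hOW _
    have h3 := (EReal.addLECancellable_coe tbar).add_le_add_iff_right.mp h2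
    rw [hv]
    calc (I : EReal) + (v : EReal) = ((I + v : ℝ) : EReal) := by push_cast; rfl
      _ ≤ V W := h3
  · rintro ⟨hsubV, hEp⟩
    intro Z
    rw [hR]
    refine le_iInf fun t => ?_
    have h := hsubV (Z - t • oneLp μ)
    rw [hv] at h
    set I : ℝ := ∫ θ, p θ * (Z θ - X θ) ∂μ with hI
    have hJ : ∫ θ, p θ * ((Z - t • oneLp μ) θ - Y θ) ∂μ = I + (tbar - t) := by
      have hcongr : (fun θ => p θ * ((Z - t • oneLp μ) θ - Y θ))
          =ᵐ[μ] fun θ => p θ * (Z θ - X θ) + (tbar - t) * p θ := by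
        filter_upwards [coe_sub_smul_one Z t, coe_sub_smul_one X tbar] with θ h1 h2
        rw [h1, hY, h2]; ring
      rw [integral_congr_ae hcongr,
        integral_add (integ_pair p Z X) (((Lp.memLp p).integrable one_le_two).const_mul _),
        integral_const_mul _ _, hEp, mul_one, hI]
    rw [hJ] at h
    have h2 := add_le_add_left h (t : EReal)
    calc (I : EReal) + ((tbar + v : ℝ) : EReal)
        = ((I + (tbar - t) : ℝ) : EReal) + (v : EReal) + (t : EReal) := by
          norm_cast
          ring
      _ ≤ V (Z - t • oneLp μ) + (t : EReal) := h2
      _ = (t : EReal) + V (Z - t • oneLp μ) := add_comm _ _
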